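/- Cardinality of Extrema II: assume the IFS is a fractal of unity with angles θ_k = 2πN_k/M and the fixed points p_1,…,p_n are not all equal; set V := M / gcd(N_1,…,N_n,M). Then Ext(F) is finite: every extremal point of F has the form T_b(p_x) with x nonempty and focal and |b| + |x| ≤ 2V, so that |Ext(F)| is at most the number of such pairs (b,x), namely |Ext(F)| ≤ Σ_{l=1}^{2V} l·n^l. -/

import Mathlib

open Complex

noncomputable section

/-- Composition of IFS maps along a finite word: `T_a = T_{a₁} ∘ ⋯ ∘ T_{a_L}`. -/
def wordMap {n : ℕ} (T : Fin n → ℂ → ℂ) : List (Fin n) → ℂ → ℂ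
  | [] => id
  | k :: a => T k ∘ wordMap T a

/-- Product of factors along a finite word: `φ_a = φ_{a₁} ⋯ φ_{a_L}`. -/
def wordFactor {n : ℕ} (φ : Fin n → ℂ) (a : List (Fin n)) : ℂ :=
  (a.map φ).prod

/-- `e` is an extremal point of `S`: it belongs to `S` and does not lie in the open
segment between any two distinct points of `S`. -/
def IsExtremal (S : Set ℂ) (e : ℂ) : Prop :=
  e ∈ S ∧ ¬ ∃ s₁ s₂ : ℂ, s₁ ∈ S ∧ s₂ ∈ S ∧ s₁ ≠ s₂ ∧
    ∃ t : ℝ, 0 < t ∧ t < 1 ∧ e = t • s₁ + (1 - t) • s₂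

lemma wordMap_nil {n : ℕ} (T : Fin n → ℂ → ℂ) (z : ℂ) : wordMap T [] z = z := rfl
lemma wordMap_cons {n : ℕ} (T : Fin n → ℂ → ℂ) (k : Fin n) (a : List (Fin n)) (z : ℂ) :
    wordMap T (k :: a) z = T k (wordMap T a z) := rfl

lemma wordMap_append {n : ℕ} (T : Fin n → ℂ → ℂ) (u v : List (Fin n)) (z : ℂ) :
    wordMap T (u ++ v) z = wordMap T u (wordMap T v z) := by
  induction u with
  | nil => rfl
  | cons k l ih => simp [wordMap_cons, ih]

lemma wordFactor_nil {n : ℕ} (φ : Fin n → ℂ) : wordFactor φ [] = 1 := rfl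
lemma wordFactor_cons {n : ℕ} (φ : Fin n → ℂ) (k : Fin n) (a : List (Fin n)) :
    wordFactor φ (k :: a) = φ k * wordFactor φ a := by simp [wordFactor]

lemma wordMap_affine {n : ℕ} {p φ : Fin n → ℂ} {T : Fin n → ℂ → ℂ}
    (hT : ∀ k z, T k z = p k + φ k * (z - p k)) :
    ∀ (a : List (Fin n)) (z : ℂ), wordMap T a z = wordMap T a 0 + wordFactor φ a * z := by
  intro a
  induction a with
  | nil => intro z; simp [wordMap_nil, wordFactor_nil]
  | cons k l ih =>
    intro z
    rw [wordMap_cons, wordMap_cons, ih z, ih 0, hT, hT, wordFactor_cons]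
    ring

lemma wordFactor_ne_zero {n : ℕ} {φ : Fin n → ℂ}
    (hφ : ∀ k, 0 < ‖φ k‖) (a : List (Fin n)) : wordFactor φ a ≠ 0 := by
  induction a with
  | nil => simp [wordFactor_nil]
  | cons k l ih =>
    rw [wordFactor_cons]
    exact mul_ne_zero (by simpa using (hφ k).ne') ih

lemma wordFactor_abs_lt_one {n : ℕ} {φ : Fin n → ℂ}
    (hφ : ∀ k, 0 < ‖φ k‖ ∧ ‖φ k‖ < 1) :
    ∀ a : List (Fin n), a ≠ [] → ‖wordFactor φ a‖ < 1 := by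
  intro a
  induction a with
  | nil => intro h; exact absurd rfl h
  | cons k l ih =>
    intro _
    rw [wordFactor_cons, norm_mul]
    rcases eq_or_ne l [] with rfl | hl
    · simpa [wordFactor_nil] using (hφ k).2
    · calc ‖φ k‖ * ‖wordFactor φ l‖
          < 1 * 1 := by
            apply mul_lt_mul'' (hφ k).2 (ih hl) (norm_nonneg _) (norm_nonneg _)
        _ = 1 := by ring

lemma wordFactor_form {n : ℕ} {φ : Fin n → ℂ} {M : ℕ} (hM : 1 ≤ M) {N : Fin n → ℕ}
    (hunity : ∀ k, φ k = (‖φ k‖ : ℂ) *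
      Complex.exp ((((2 * Real.pi * (N k : ℝ)) / (M : ℝ) : ℝ) : ℂ) * Complex.I)) :
    ∀ a : List (Fin n), wordFactor φ a =
      (((a.map (fun k => ‖φ k‖)).prod : ℝ) : ℂ) *
      Complex.exp ((((2 * Real.pi * (((a.map N).sum : ℕ) : ℝ)) / (M : ℝ) : ℝ) : ℂ) * Complex.I) := by
  intro a
  induction a with
  | nil => simp [wordFactor_nil]
  | cons k l ih =>
    rw [wordFactor_cons, ih, hunity k]
    have hre : ((2 * Real.pi * ((N k : ℕ) : ℝ)) / (M : ℝ))
        + ((2 * Real.pi * (((l.map N).sum : ℕ) : ℝ)) / (M : ℝ))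
        = ((2 * Real.pi * ((((k :: l).map N).sum : ℕ) : ℝ)) / (M : ℝ)) := by
      rw [← add_div]
      push_cast [List.map_cons, List.sum_cons]
      ring
    have harg : (((2 * Real.pi * ((N k : ℕ) : ℝ)) / (M : ℝ) : ℝ) : ℂ) * Complex.I
        + (((2 * Real.pi * (((l.map N).sum : ℕ) : ℝ)) / (M : ℝ) : ℝ) : ℂ) * Complex.I
        = (((2 * Real.pi * ((((k :: l).map N).sum : ℕ) : ℝ)) / (M : ℝ) : ℝ) : ℂ) * Complex.I := by
      rw [← add_mul, ← Complex.ofReal_add, hre]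
    rw [← harg, Complex.exp_add]
    simp only [List.map_cons, List.prod_cons]
    push_cast
    ring

lemma wordFactor_focal {n : ℕ} {φ : Fin n → ℂ} {M : ℕ} (hM : 1 ≤ M) {N : Fin n → ℕ}
    (hφ : ∀ k, 0 < ‖φ k‖)
    (hunity : ∀ k, φ k = (‖φ k‖ : ℂ) *
      Complex.exp ((((2 * Real.pi * (N k : ℝ)) / (M : ℝ) : ℝ) : ℂ) * Complex.I))
    (a : List (Fin n)) (hdvd : M ∣ (a.map N).sum) :
    ∃ r : ℝ, 0 < r ∧ wordFactor φ a = (r : ℂ) := by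
  obtain ⟨m, hm⟩ := hdvd
  refine ⟨(a.map (fun k => ‖φ k‖)).prod, ?_, ?_⟩
  · apply List.prod_pos
    intro x hx
    simp only [List.mem_map] at hx
    obtain ⟨k, _, rfl⟩ := hx
    exact hφ k
  · rw [wordFactor_form hM hunity a]
    have hMne : (M : ℝ) ≠ 0 := by positivity
    have : ((2 * Real.pi * (((a.map N).sum : ℕ) : ℝ)) / (M : ℝ) : ℝ) = (m : ℝ) * (2 * Real.pi) := by
      rw [hm]; push_cast; field_simp
    rw [this]
    have : ((((m : ℝ) * (2 * Real.pi)) : ℝ) : ℂ) * Complex.I = (m : ℂ) * (2 * Real.pi * Complex.I) := by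
      push_cast; ring
    rw [this, Complex.exp_nat_mul, Complex.exp_two_pi_mul_I, one_pow, mul_one]

lemma wordMap_mem {n : ℕ} {T : Fin n → ℂ → ℂ} {F : Set ℂ}
    (hFinv : F = ⋃ k, T k '' F) :
    ∀ (a : List (Fin n)) (z : ℂ), z ∈ F → wordMap T a z ∈ F := by
  intro a
  induction a with
  | nil => intro z hz; exact hz
  | cons k l ih =>
    intro z hz
    rw [wordMap_cons]
    have : T k (wordMap T l z) ∈ T k '' F := ⟨_, ih z hz, rfl⟩
    rw [hFinv]
    exact Set.mem_iUnion.mpr ⟨k, this⟩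


lemma extremal_pullback {n : ℕ} {p φ : Fin n → ℂ} {T : Fin n → ℂ → ℂ} {F : Set ℂ}
    (hT : ∀ k z, T k z = p k + φ k * (z - p k))
    (hφ0 : ∀ k, 0 < ‖φ k‖)
    (hFinv : F = ⋃ k, T k '' F)
    {e z : ℂ} {b : List (Fin n)} (he : IsExtremal F e) (hz : z ∈ F)
    (heq : e = wordMap T b z) : IsExtremal F z := by
  refine ⟨hz, fun ⟨s₁, s₂, h1, h2, hne, t, ht0, ht1, hcomb⟩ => he.2 ?_⟩
  refine ⟨wordMap T b s₁, wordMap T b s₂, wordMap_mem hFinv b s₁ h1,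
    wordMap_mem hFinv b s₂ h2, ?_, t, ht0, ht1, ?_⟩
  · intro hc
    apply hne
    rw [wordMap_affine hT b s₁, wordMap_affine hT b s₂] at hc
    exact mul_left_cancel₀ (wordFactor_ne_zero hφ0 b) (by linear_combination hc)
  · rw [heq, hcomb]
    rw [wordMap_affine hT b (t • s₁ + (1 - t) • s₂), wordMap_affine hT b s₁,
      wordMap_affine hT b s₂, Complex.real_smul, Complex.real_smul,
      Complex.real_smul, Complex.real_smul]
    push_cast
    ring

lemma focal_trap {n : ℕ} {p φ : Fin n → ℂ} {T : Fin n → ℂ → ℂ} {F : Set ℂ}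
    (hT : ∀ k z, T k z = p k + φ k * (z - p k))
    (hφ : ∀ k, 0 < ‖φ k‖ ∧ ‖φ k‖ < 1)
    (hFinv : F = ⋃ k, T k '' F)
    {w z q : ℂ} {x : List (Fin n)} (hx : x ≠ [])
    {r : ℝ} (hr : 0 < r) (hfr : wordFactor φ x = (r : ℂ))
    (hq : wordMap T x q = q)
    (hw : IsExtremal F w) (hz : z ∈ F) (heq : w = wordMap T x z) :
    w = q := by
  by_contra hne
  have hr1 : r < 1 := by
    have := wordFactor_abs_lt_one hφ x hx
    rw [hfr] at this
    simpa [abs_of_pos hr] using this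
  -- affine description relative to q
  have haff : ∀ y : ℂ, wordMap T x y - q = (r : ℂ) * (y - q) := by
    intro y
    have h1 := wordMap_affine hT x y
    have h2 := wordMap_affine hT x q
    rw [hq] at h2
    rw [hfr] at h1 h2
    linear_combination h1 - h2
  have hwF : w ∈ F := hw.1
  set u : ℂ := w - q with hu
  have hune : u ≠ 0 := sub_ne_zero.mpr hne
  have hrC : (r : ℂ) ≠ 0 := by exact_mod_cast hr.ne'
  -- z - q = u / r
  have hz_eq : z - q = u / (r : ℂ) := by
    have := haff z
    rw [← heq] at this
    field_simp
    linear_combination -this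
  -- T_x w ∈ F and T_x w - q = r u
  have htw : wordMap T x w ∈ F := wordMap_mem hFinv x w hwF
  have htw_eq : wordMap T x w - q = (r : ℂ) * u := haff w
  apply hw.2
  refine ⟨z, wordMap T x w, hz, htw, ?_, r / (1 + r), ?_, ?_, ?_⟩
  · intro hc
    have : u / (r : ℂ) = (r : ℂ) * u := by
      rw [← hz_eq, ← htw_eq, hc]
    have h2 : u * (1 - (r:ℂ) * r) = 0 := by
      field_simp at this
      linear_combination u * this
    rcases mul_eq_zero.mp h2 with h | h
    · exact hune h
    · have : (r : ℝ) * r = 1 := by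
        have : ((1 : ℂ) - (r:ℂ)*(r:ℂ)) = 0 := by linear_combination h
        exact_mod_cast (by linear_combination -this : ((r:ℂ)*(r:ℂ)) = 1)
      nlinarith
  · positivity
  · rw [div_lt_one (by linarith)]; linarith
  · have h1r : ((1 : ℝ) + r) ≠ 0 := by positivity
    have h1rC : ((1 : ℂ) + (r : ℂ)) ≠ 0 := by exact_mod_cast h1r
    rw [Complex.real_smul, Complex.real_smul]
    push_cast
    have hz' : z = q + u / (r : ℂ) := by linear_combination hz_eq
    have htw' : wordMap T x w = q + (r : ℂ) * u := by linear_combination htw_eq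
    rw [hz', htw']
    have hwq : w = q + u := by rw [hu]; ring
    rw [hwq]
    field_simp
    ring

lemma listSumRange (f : ℕ → ℕ) (d : ℕ) :
    ((List.range d).map f).sum = ∑ i ∈ Finset.range d, f i := by
  induction d with
  | zero => simp
  | succ d ih => rw [List.range_succ, List.map_append, List.sum_append,
      Finset.sum_range_succ, ih]; simp

lemma sumShift (f : ℕ → ℕ) (m : ℕ) : ∀ d : ℕ,
    ∑ i ∈ Finset.range (m + d), f i
      = (∑ i ∈ Finset.range m, f i) + ∑ i ∈ Finset.range d, f (m + i) := by
  intro d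
  induction d with
  | zero => simp
  | succ d ih => rw [← Nat.add_assoc, Finset.sum_range_succ, ih,
      Finset.sum_range_succ]; ring

lemma main_extremal {n : ℕ} (hn : 1 ≤ n) {p φ : Fin n → ℂ}
    (hφ : ∀ k, 0 < ‖φ k‖ ∧ ‖φ k‖ < 1)
    {T : Fin n → ℂ → ℂ} (hT : ∀ k z, T k z = p k + φ k * (z - p k))
    {F : Set ℂ} (hFinv : F = ⋃ k, T k '' F)
    {M : ℕ} (hM : 1 ≤ M) {N : Fin n → ℕ}
    (hunity : ∀ k, φ k = (‖φ k‖ : ℂ) *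
      Complex.exp ((((2 * Real.pi * (N k : ℝ)) / (M : ℝ) : ℝ) : ℂ) * Complex.I))
    (pp : List (Fin n) → ℂ) (hpp : ∀ x, x ≠ [] → wordMap T x (pp x) = pp x)
    {e : ℂ} (he : IsExtremal F e) :
    ∃ (b x : List (Fin n)), x ≠ [] ∧
      (∃ r : ℝ, 0 < r ∧ wordFactor φ x = (r : ℂ)) ∧
      b.length + x.length ≤ M / Nat.gcd (Finset.univ.gcd N) M ∧
      e = wordMap T b (pp x) := by
  classical
  have hφ0 : ∀ k, 0 < ‖φ k‖ := fun k => (hφ k).1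
  -- step function
  have hstep : ∀ w : F, ∃ y : Fin n × F, (w : ℂ) = T y.1 (y.2 : ℂ) := by
    intro w
    have hwF : (w : ℂ) ∈ ⋃ k, T k '' F := by rw [← hFinv]; exact w.2
    obtain ⟨k, z, hzF, hz⟩ := Set.mem_iUnion.mp hwF
    exact ⟨⟨k, ⟨z, hzF⟩⟩, hz.symm⟩
  let nx : F → Fin n × F := fun w => (hstep w).choose
  have hnx : ∀ w : F, (w : ℂ) = T (nx w).1 ((nx w).2 : ℂ) := fun w => (hstep w).choose_spec
  let st : ℕ → Fin n × F := fun L => Nat.rec (⟨⟨0, hn⟩, ⟨e, he.1⟩⟩) (fun _ q => nx q.2) L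
  let a : ℕ → Fin n := fun L => (st (L + 1)).1
  let E : ℕ → ℂ := fun L => ((st L).2 : ℂ)
  have hE0 : E 0 = e := rfl
  have hEF : ∀ L, E L ∈ F := fun L => (st L).2.2
  have hchain : ∀ L, E L = T (a L) (E (L + 1)) := fun L => hnx (st L).2
  have key : ∀ L, e = wordMap T ((List.range L).map a) (E L) := by
    intro L
    induction L with
    | zero => simpa [wordMap_nil] using hE0.symm
    | succ L ih =>
      rw [List.range_succ, List.map_append, wordMap_append]
      simpa [wordMap_cons, wordMap_nil, ← hchain L] using ih
  -- pigeonhole on partial angle sums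
  set g := Nat.gcd (Finset.univ.gcd N) M with hg
  set V := M / g with hV
  have hM0 : 0 < M := hM
  have hgpos : 0 < g := Nat.gcd_pos_of_pos_right _ hM0
  have hgM : g ∣ M := Nat.gcd_dvd_right _ _
  have hVg : V * g = M := Nat.div_mul_cancel hgM
  set S : ℕ → ℕ := fun L => ∑ i ∈ Finset.range L, N (a i) with hS
  have hgS : ∀ L, g ∣ S L := by
    intro L
    apply Finset.dvd_sum
    intro i _
    exact (Nat.gcd_dvd_left _ _).trans (Finset.gcd_dvd (Finset.mem_univ _))
  have hmaps : ∀ L ∈ Finset.range (V + 1), (S L % M) / g ∈ Finset.range V := by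
    intro L _
    rw [Finset.mem_range, Nat.div_lt_iff_lt_mul hgpos, hVg]
    exact Nat.mod_lt _ hM0
  obtain ⟨L1, hL1, L2, hL2, hne12, hfeq⟩ :=
    Finset.exists_ne_map_eq_of_card_lt_of_maps_to (by simp) hmaps
  -- wlog L1 < L2
  wlog hlt : L1 < L2 generalizing L1 L2
  · exact this L2 hL2 L1 hL1 hne12.symm hfeq.symm (by omega)
  have hdm : ∀ L, g ∣ S L % M := fun L => (Nat.dvd_mod_iff hgM).mpr (hgS L)
  have hmodeq : S L1 % M = S L2 % M := by
    have e1 := Nat.div_mul_cancel (hdm L1)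
    have e2 := Nat.div_mul_cancel (hdm L2)
    rw [← e1, ← e2, hfeq]
  have hle : S L1 ≤ S L2 :=
    Finset.sum_le_sum_of_subset (Finset.range_subset_range.mpr hlt.le)
  have hdvd : M ∣ S L2 - S L1 := (Nat.modEq_iff_dvd' hle).mp hmodeq
  set d := L2 - L1 with hdd
  have hd : L1 + d = L2 := by omega
  set x : List (Fin n) := (List.range d).map (fun i => a (L1 + i)) with hxdef
  set b : List (Fin n) := (List.range L1).map a with hbdef
  have hx_ne : x ≠ [] := by
    simp only [hxdef, ne_eq, List.map_eq_nil_iff, List.range_eq_nil]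
    omega
  have hsum : (x.map N).sum = S L2 - S L1 := by
    rw [hxdef, List.map_map, listSumRange]
    simp only [Function.comp_def]
    have := sumShift (fun i => N (a i)) L1 d
    rw [hd] at this
    simp only [hS]
    omega
  obtain ⟨r, hr, hfr⟩ := wordFactor_focal hM hφ0 hunity x (hsum ▸ hdvd)
  have hsplit : (List.range L2).map a = b ++ x := by
    rw [← hd, List.range_add, List.map_append, List.map_map]
    rfl
  have hkey2 : e = wordMap T b (wordMap T x (E L2)) := by
    rw [← wordMap_append]
    rw [← hsplit]
    exact key L2
  set w : ℂ := wordMap T x (E L2) with hwdef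
  have hwF : w ∈ F := wordMap_mem hFinv x _ (hEF L2)
  have hwex : IsExtremal F w := extremal_pullback hT hφ0 hFinv he hwF hkey2
  have hw_eq : w = pp x :=
    focal_trap hT hφ hFinv hx_ne hr hfr (hpp x hx_ne) hwex (hEF L2) rfl
  refine ⟨b, x, hx_ne, ⟨r, hr, hfr⟩, ?_, by rw [← hw_eq]; exact hkey2⟩
  have hbl : b.length = L1 := by simp [hbdef]
  have hxl : x.length = d := by simp [hxdef]
  rw [hbl, hxl]
  have : L2 < V + 1 := Finset.mem_range.mp hL2
  omega

/-- Cardinality of Extrema II: in a fractal of unity with angles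
`θ_k = 2πN_k/M`, not all fixed points equal, and `V := M / gcd(N₁,…,Nₙ,M)`, the set
`Ext(F)` is finite: every extremal point has the form `T_b(p_x)` with `x` nonempty focal
and `|b| + |x| ≤ 2V`, and `|Ext(F)| ≤ ∑_{l=1}^{2V} l·nˡ`. -/
theorem cardinality_of_extrema_II {n : ℕ} (hn : 1 ≤ n) (p φ : Fin n → ℂ)
    (hφ : ∀ k, 0 < ‖φ k‖ ∧ ‖φ k‖ < 1)
    (T : Fin n → ℂ → ℂ) (hT : ∀ k z, T k z = p k + φ k * (z - p k))
    (F : Set ℂ) (hFne : F.Nonempty) (hFc : IsCompact F)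
    (hFinv : F = ⋃ k, T k '' F)
    (hne : ∃ i j, p i ≠ p j)
    (M : ℕ) (hM : 1 ≤ M) (N : Fin n → ℕ) (hN : ∀ k, N k < M)
    (hunity : ∀ k, φ k = (‖φ k‖ : ℂ) *
      Complex.exp ((((2 * Real.pi * (N k : ℝ)) / (M : ℝ) : ℝ) : ℂ) * Complex.I))
    (pp : List (Fin n) → ℂ) (hpp : ∀ x, x ≠ [] → wordMap T x (pp x) = pp x) :
    {e | IsExtremal F e}.Finite ∧
    (∀ e, IsExtremal F e → ∃ (b x : List (Fin n)), x ≠ [] ∧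
      (∃ r : ℝ, 0 < r ∧ wordFactor φ x = (r : ℂ)) ∧
      b.length + x.length ≤ 2 * (M / Nat.gcd (Finset.univ.gcd N) M) ∧
      e = wordMap T b (pp x)) ∧
    {e | IsExtremal F e}.ncard ≤
      ∑ l ∈ Finset.Icc 1 (2 * (M / Nat.gcd (Finset.univ.gcd N) M)), l * n ^ l := by
  classical
  set V := M / Nat.gcd (Finset.univ.gcd N) M with hV
  have hmain : ∀ e, IsExtremal F e → ∃ (b x : List (Fin n)), x ≠ [] ∧
      (∃ r : ℝ, 0 < r ∧ wordFactor φ x = (r : ℂ)) ∧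
      b.length + x.length ≤ V ∧ e = wordMap T b (pp x) :=
    fun e he => main_extremal hn hφ hT hFinv hM hunity pp hpp he
  set D : Finset ℂ := (Finset.Icc 1 (2 * V)).biUnion (fun l =>
    (Finset.Icc 1 l).biUnion (fun j => Finset.image
      (fun g : Fin l → Fin n => wordMap T ((List.ofFn g).take (l - j))
        (pp ((List.ofFn g).drop (l - j)))) Finset.univ)) with hD
  have hcover : {e | IsExtremal F e} ⊆ ↑D := by
    intro e he
    obtain ⟨b, x, hx, hfoc, hlen, heq⟩ := hmain e he
    have hx1 : 1 ≤ x.length := List.length_pos_iff.mpr hx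
    refine Finset.mem_coe.mpr ?_
    rw [hD, Finset.mem_biUnion]
    refine ⟨(b ++ x).length, ?_, ?_⟩
    · rw [Finset.mem_Icc, List.length_append]; omega
    rw [Finset.mem_biUnion]
    refine ⟨x.length, ?_, ?_⟩
    · rw [Finset.mem_Icc, List.length_append]; omega
    rw [Finset.mem_image]
    refine ⟨(b ++ x).get, Finset.mem_univ _, ?_⟩
    rw [List.ofFn_get]
    have hbl : (b ++ x).length - x.length = b.length := by
      rw [List.length_append]; omega
    rw [hbl, List.take_left, List.drop_left]
    exact heq.symm
  have hfin : {e | IsExtremal F e}.Finite := Set.Finite.subset D.finite_toSet hcover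
  refine ⟨hfin, fun e he => ?_, ?_⟩
  · obtain ⟨b, x, hx, hfoc, hlen, heq⟩ := hmain e he
    exact ⟨b, x, hx, hfoc, by omega, heq⟩
  · calc {e | IsExtremal F e}.ncard ≤ (↑D : Set ℂ).ncard :=
          Set.ncard_le_ncard hcover D.finite_toSet
      _ = D.card := Set.ncard_coe_finset D
      _ ≤ ∑ l ∈ Finset.Icc 1 (2 * V), ((Finset.Icc 1 l).biUnion (fun j => Finset.image
            (fun g : Fin l → Fin n => wordMap T ((List.ofFn g).take (l - j))
              (pp ((List.ofFn g).drop (l - j)))) Finset.univ)).card :=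
          Finset.card_biUnion_le
      _ ≤ ∑ l ∈ Finset.Icc 1 (2 * V), l * n ^ l := by
          apply Finset.sum_le_sum
          intro l _
          calc ((Finset.Icc 1 l).biUnion (fun j => Finset.image
                (fun g : Fin l → Fin n => wordMap T ((List.ofFn g).take (l - j))
                  (pp ((List.ofFn g).drop (l - j)))) Finset.univ)).card
              ≤ ∑ j ∈ Finset.Icc 1 l, (Finset.image
                (fun g : Fin l → Fin n => wordMap T ((List.ofFn g).take (l - j))
                  (pp ((List.ofFn g).drop (l - j)))) Finset.univ).card :=
                Finset.card_biUnion_le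
            _ ≤ ∑ j ∈ Finset.Icc 1 l, n ^ l := by
                apply Finset.sum_le_sum
                intro j _
                calc (Finset.image _ Finset.univ).card
                    ≤ (Finset.univ : Finset (Fin l → Fin n)).card := Finset.card_image_le
                  _ = n ^ l := by simp [Fintype.card_fun]
            _ = l * n ^ l := by
                rw [Finset.sum_const, Nat.card_Icc]
                simp [smul_eq_mul]
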